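/- arXiv:alg-geom/9606019 — 2 statements merged into one kernel-verified Lean document; each statement's English description precedes it below -/
import Mathlib

section
/- For every real number x with 0 < x < 1/4, one has Σ_{n≥0} (catalan n) · x^{n+1} = (1 - √(1-4x))/2. -/
open Finset

private lemma catalan_le_four_pow (n : ℕ) : catalan n ≤ 4 ^ n := by
  calc catalan n ≤ (n + 1) * catalan n := Nat.le_mul_of_pos_left _ (Nat.succ_pos n)
    _ = n.centralBinom := succ_mul_catalan_eq_centralBinom n
    _ ≤ (2 * n + 1).choose n := Nat.choose_le_choose n (by omega)
    _ ≤ 4 ^ n := Nat.choose_middle_le_pow n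

private lemma triangle_le_sq (g : ℕ → ℝ) (hg : ∀ n, 0 ≤ g n) (N : ℕ) :
    ∑ m ∈ range N, ∑ ij ∈ Finset.HasAntidiagonal.antidiagonal m, g ij.1 * g ij.2
      ≤ (∑ n ∈ range N, g n) ^ 2 := by
  rw [sq, Finset.sum_mul_sum, ← Finset.sum_product']
  rw [← Finset.sum_biUnion]
  · apply Finset.sum_le_sum_of_subset_of_nonneg
    · intro ij hij
      simp only [Finset.mem_biUnion, Finset.mem_range, Finset.HasAntidiagonal.mem_antidiagonal] at hij
      obtain ⟨m, hm, hsum⟩ := hij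
      simp only [Finset.mem_product, Finset.mem_range]
      omega
    · intro ij _ _
      exact mul_nonneg (hg _) (hg _)
  · intro a _ b _ hab
    simp only [Function.onFun, Finset.disjoint_left]
    intro ij hija hijb
    simp only [Finset.HasAntidiagonal.mem_antidiagonal] at hija hijb
    exact hab (hija.symm.trans hijb)

theorem catalan_generating_function_closed_form (x : ℝ) (hx0 : 0 < x) (hx : x < 1 / 4) :
    ∑' n : ℕ, (catalan n : ℝ) * x ^ (n + 1) = (1 - Real.sqrt (1 - 4 * x)) / 2 := by
  set f : ℕ → ℝ := fun n => (catalan n : ℝ) * x ^ (n + 1) with hf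
  have hfnn : ∀ n, 0 ≤ f n := fun n =>
    mul_nonneg (Nat.cast_nonneg _) (pow_nonneg hx0.le _)
  have h4x : 4 * x < 1 := by linarith
  have h4xnn : 0 ≤ 4 * x := by linarith
  -- summability
  have hbound : ∀ n, f n ≤ x * (4 * x) ^ n := by
    intro n
    have : (catalan n : ℝ) ≤ 4 ^ n := by
      exact_mod_cast Nat.cast_le.mpr (catalan_le_four_pow n)
    calc f n = (catalan n : ℝ) * x ^ (n + 1) := rfl
      _ ≤ 4 ^ n * x ^ (n + 1) := by
          apply mul_le_mul_of_nonneg_right this (pow_nonneg hx0.le _)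
      _ = x * (4 * x) ^ n := by ring
  have hs : Summable f := by
    apply Summable.of_nonneg_of_le hfnn hbound
    exact (summable_geometric_of_lt_one h4xnn h4x).mul_left x
  set S := ∑' n, f n with hS
  -- the closed form value
  have hsub : 0 < 1 - 4 * x := by linarith
  set s := Real.sqrt (1 - 4 * x) with hsdef
  have hs2 : s ^ 2 = 1 - 4 * x := Real.sq_sqrt hsub.le
  have hspos : 0 < s := Real.sqrt_pos.mpr hsub
  have hslt1 : s < 1 := by
    nlinarith [hs2, hspos]
  set L := (1 - s) / 2 with hLdef
  have hLfix : L = x + L ^ 2 := by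
    rw [hLdef]; nlinarith [hs2]
  have hLlt : L < 1 / 2 := by rw [hLdef]; linarith
  have hLpos : 0 < L := by nlinarith [hLfix]
  -- Cauchy product identity: S = x + S ^ 2
  have hnorm : Summable fun n => ‖f n‖ := by
    simpa [Real.norm_of_nonneg (hfnn _)] using hs
  have hconv : ∀ m, ∑ ij ∈ Finset.HasAntidiagonal.antidiagonal m, f ij.1 * f ij.2
      = (catalan (m + 1) : ℝ) * x ^ (m + 2) := by
    intro m
    rw [catalan_succ' m]
    push_cast
    rw [Finset.sum_mul]
    apply Finset.sum_congr rfl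
    intro ij hij
    rw [Finset.HasAntidiagonal.mem_antidiagonal] at hij
    have : ij.1 + 1 + (ij.2 + 1) = m + 2 := by omega
    simp only [hf]
    rw [mul_mul_mul_comm, ← pow_add, this]
  have hcauchy : S * S = ∑' m, (catalan (m + 1) : ℝ) * x ^ (m + 2) := by
    rw [hS, tsum_mul_tsum_eq_tsum_sum_antidiagonal_of_summable_norm hnorm hnorm]
    exact tsum_congr hconv
  have hshift : S = x + ∑' m, (catalan (m + 1) : ℝ) * x ^ (m + 2) := by
    rw [hS, Summable.tsum_eq_zero_add hs]
    simp only [hf]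
    norm_num
  have hSfix : S = x + S ^ 2 := by
    rw [sq, hcauchy]; exact hshift
  -- partial sums are ≤ L
  have hpartial : ∀ N, ∑ n ∈ range N, f n ≤ L := by
    intro N
    induction N with
    | zero => simpa using hLpos.le
    | succ N ih =>
      have hrec : ∑ n ∈ range (N + 1), f n
          = x + ∑ m ∈ range N, ∑ ij ∈ Finset.HasAntidiagonal.antidiagonal m, f ij.1 * f ij.2 := by
        rw [Finset.sum_range_succ' f N]
        simp only [hconv]
        have : f 0 = x := by simp [hf]
        rw [this, add_comm]
      rw [hrec]
      have h1 : ∑ m ∈ range N, ∑ ij ∈ Finset.HasAntidiagonal.antidiagonal m, f ij.1 * f ij.2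
          ≤ (∑ n ∈ range N, f n) ^ 2 := triangle_le_sq f hfnn N
      have h2 : (∑ n ∈ range N, f n) ^ 2 ≤ L ^ 2 := by
        apply pow_le_pow_left₀ (Finset.sum_nonneg fun n _ => hfnn n) ih
      linarith [hLfix]
  have hSle : S ≤ L := by
    rw [hS]
    exact Summable.tsum_le_of_sum_range_le hs hpartial
  -- conclude S = L
  have hfactor : (S - L) * (S + L - 1) = 0 := by nlinarith [hSfix, hLfix]
  have hne : S + L - 1 ≠ 0 := by
    have : S < 1 / 2 := lt_of_le_of_lt hSle hLlt
    intro h; linarith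
  have : S - L = 0 := by
    rcases mul_eq_zero.mp hfactor with h | h
    · exact h
    · exact absurd h hne
  have hSL : S = L := by linarith
  rw [← hS] at *
  exact hSL
end

section
/- Let V be a module over the quaternions ℍ and let α be an ℝ-bilinear form on V (V viewed as a real vector space) satisfying α(i·x, i·y) = α(x,y) and α(j·x, j·y) = α(x,y) for all x, y ∈ V. Then α(q·x, q·y) = α(x,y) for every unit quaternion q (‖q‖ = 1) and all x, y ∈ V. -/
theorem unit_quaternion_invariance
    {V : Type*} [AddCommGroup V] [Module (Quaternion ℝ) V]
    (α : V → V → ℝ)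
    (hadd1 : ∀ x x' y, α (x + x') y = α x y + α x' y)
    (hadd2 : ∀ x y y', α x (y + y') = α x y + α x y')
    (hsmul1 : ∀ (r : ℝ) (x y : V), α (((r : ℝ) : Quaternion ℝ) • x) y = r * α x y)
    (hsmul2 : ∀ (r : ℝ) (x y : V), α x (((r : ℝ) : Quaternion ℝ) • y) = r * α x y)
    (i j : Quaternion ℝ) (hi : i = ⟨0, 1, 0, 0⟩) (hj : j = ⟨0, 0, 1, 0⟩)
    (hI : ∀ x y, α (i • x) (i • y) = α x y)
    (hJ : ∀ x y, α (j • x) (j • y) = α x y) :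
    ∀ (q : Quaternion ℝ), ‖q‖ = 1 → ∀ x y, α (q • x) (q • y) = α x y := by
  intro q hq x y
  set k : Quaternion ℝ := i * j with hk
  -- quaternion identities
  have qsimp : ∀ a b : Quaternion ℝ, a = b ↔ _ := fun a b => Quaternion.ext_iff
  have hii : i * i = -1 := by
    ext <;> simp only [Quaternion.re_mul, Quaternion.imI_mul, Quaternion.imJ_mul, Quaternion.imK_mul, Quaternion.re_neg, Quaternion.imI_neg, Quaternion.imJ_neg, Quaternion.imK_neg, Quaternion.re_one, Quaternion.imI_one, Quaternion.imJ_one, Quaternion.imK_one, Quaternion.re_coe, Quaternion.imI_coe, Quaternion.imJ_coe, Quaternion.imK_coe, Quaternion.re_add, Quaternion.imI_add, Quaternion.imJ_add, Quaternion.imK_add] <;> simp [hi, hj]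
  have hjj : j * j = -1 := by
    ext <;> simp only [Quaternion.re_mul, Quaternion.imI_mul, Quaternion.imJ_mul, Quaternion.imK_mul, Quaternion.re_neg, Quaternion.imI_neg, Quaternion.imJ_neg, Quaternion.imK_neg, Quaternion.re_one, Quaternion.imI_one, Quaternion.imJ_one, Quaternion.imK_one, Quaternion.re_coe, Quaternion.imI_coe, Quaternion.imJ_coe, Quaternion.imK_coe, Quaternion.re_add, Quaternion.imI_add, Quaternion.imJ_add, Quaternion.imK_add] <;> simp [hi, hj]
  have hkk : k * k = -1 := by
    rw [hk]; ext <;> simp only [Quaternion.re_mul, Quaternion.imI_mul, Quaternion.imJ_mul, Quaternion.imK_mul, Quaternion.re_neg, Quaternion.imI_neg, Quaternion.imJ_neg, Quaternion.imK_neg, Quaternion.re_one, Quaternion.imI_one, Quaternion.imJ_one, Quaternion.imK_one, Quaternion.re_coe, Quaternion.imI_coe, Quaternion.imJ_coe, Quaternion.imK_coe, Quaternion.re_add, Quaternion.imI_add, Quaternion.imJ_add, Quaternion.imK_add] <;> simp [hi, hj]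
  have hji : j * i = -k := by
    rw [hk]; ext <;> simp only [Quaternion.re_mul, Quaternion.imI_mul, Quaternion.imJ_mul, Quaternion.imK_mul, Quaternion.re_neg, Quaternion.imI_neg, Quaternion.imJ_neg, Quaternion.imK_neg, Quaternion.re_one, Quaternion.imI_one, Quaternion.imJ_one, Quaternion.imK_one, Quaternion.re_coe, Quaternion.imI_coe, Quaternion.imJ_coe, Quaternion.imK_coe, Quaternion.re_add, Quaternion.imI_add, Quaternion.imJ_add, Quaternion.imK_add] <;> simp [hi, hj]
  have hki : k * i = j := by
    rw [hk]; ext <;> simp only [Quaternion.re_mul, Quaternion.imI_mul, Quaternion.imJ_mul, Quaternion.imK_mul, Quaternion.re_neg, Quaternion.imI_neg, Quaternion.imJ_neg, Quaternion.imK_neg, Quaternion.re_one, Quaternion.imI_one, Quaternion.imJ_one, Quaternion.imK_one, Quaternion.re_coe, Quaternion.imI_coe, Quaternion.imJ_coe, Quaternion.imK_coe, Quaternion.re_add, Quaternion.imI_add, Quaternion.imJ_add, Quaternion.imK_add] <;> simp [hi, hj]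
  have hik : i * k = -j := by
    rw [hk]; ext <;> simp only [Quaternion.re_mul, Quaternion.imI_mul, Quaternion.imJ_mul, Quaternion.imK_mul, Quaternion.re_neg, Quaternion.imI_neg, Quaternion.imJ_neg, Quaternion.imK_neg, Quaternion.re_one, Quaternion.imI_one, Quaternion.imJ_one, Quaternion.imK_one, Quaternion.re_coe, Quaternion.imI_coe, Quaternion.imJ_coe, Quaternion.imK_coe, Quaternion.re_add, Quaternion.imI_add, Quaternion.imJ_add, Quaternion.imK_add] <;> simp [hi, hj]
  have hjk : j * k = i := by
    rw [hk]; ext <;> simp only [Quaternion.re_mul, Quaternion.imI_mul, Quaternion.imJ_mul, Quaternion.imK_mul, Quaternion.re_neg, Quaternion.imI_neg, Quaternion.imJ_neg, Quaternion.imK_neg, Quaternion.re_one, Quaternion.imI_one, Quaternion.imJ_one, Quaternion.imK_one, Quaternion.re_coe, Quaternion.imI_coe, Quaternion.imJ_coe, Quaternion.imK_coe, Quaternion.re_add, Quaternion.imI_add, Quaternion.imJ_add, Quaternion.imK_add] <;> simp [hi, hj]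
  have hkj : k * j = -i := by
    rw [hk]; ext <;> simp only [Quaternion.re_mul, Quaternion.imI_mul, Quaternion.imJ_mul, Quaternion.imK_mul, Quaternion.re_neg, Quaternion.imI_neg, Quaternion.imJ_neg, Quaternion.imK_neg, Quaternion.re_one, Quaternion.imI_one, Quaternion.imJ_one, Quaternion.imK_one, Quaternion.re_coe, Quaternion.imI_coe, Quaternion.imJ_coe, Quaternion.imK_coe, Quaternion.re_add, Quaternion.imI_add, Quaternion.imJ_add, Quaternion.imK_add] <;> simp [hi, hj]
  -- smul composition rules on V
  have sii : ∀ v : V, i • i • v = -v := by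
    intro v; rw [← mul_smul, hii, neg_one_smul]
  have sjj : ∀ v : V, j • j • v = -v := by
    intro v; rw [← mul_smul, hjj, neg_one_smul]
  have skk : ∀ v : V, k • k • v = -v := by
    intro v; rw [← mul_smul, hkk, neg_one_smul]
  have sji : ∀ v : V, j • i • v = -(k • v) := by
    intro v; rw [← mul_smul, hji, neg_smul]
  have sij : ∀ v : V, i • j • v = k • v := by
    intro v; rw [← mul_smul]
  have ski : ∀ v : V, k • i • v = j • v := by
    intro v; rw [← mul_smul, hki]
  have sik : ∀ v : V, i • k • v = -(j • v) := by
    intro v; rw [← mul_smul, hik, neg_smul]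
  have sjk : ∀ v : V, j • k • v = i • v := by
    intro v; rw [← mul_smul, hjk]
  have skj : ∀ v : V, k • j • v = -(i • v) := by
    intro v; rw [← mul_smul, hkj, neg_smul]
  -- additive facts
  have hneg1 : ∀ x y, α (-x) y = -α x y := by
    intro x y
    have h := hsmul1 (-1) x y
    rw [show (((-1 : ℝ) : Quaternion ℝ)) = -1 by push_cast; ring, neg_one_smul] at h
    rw [h]; ring
  have hneg2 : ∀ x y, α x (-y) = -α x y := by
    intro x y
    have h := hsmul2 (-1) x y
    rw [show (((-1 : ℝ) : Quaternion ℝ)) = -1 by push_cast; ring, neg_one_smul] at h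
    rw [h]; ring
  -- K invariance
  have hK : ∀ x y, α (k • x) (k • y) = α x y := by
    intro x y; rw [hk, mul_smul, mul_smul, hI, hJ]
  -- move units from second slot to first
  have sI : ∀ x y, α x (i • y) = -α (i • x) y := by
    intro x y
    have h := hI (i • x) y
    rw [sii, hneg1] at h
    linarith
  have sJ : ∀ x y, α x (j • y) = -α (j • x) y := by
    intro x y
    have h := hJ (j • x) y
    rw [sjj, hneg1] at h
    linarith
  have sK : ∀ x y, α x (k • y) = -α (k • x) y := by
    intro x y
    have h := hK (k • x) y
    rw [skk, hneg1] at h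
    linarith
  -- decomposition of q
  have hqd : q = ((q.re : ℝ) : Quaternion ℝ) + ((q.imI : ℝ) : Quaternion ℝ) * i
      + ((q.imJ : ℝ) : Quaternion ℝ) * j + ((q.imK : ℝ) : Quaternion ℝ) * k := by
    rw [hk]
    ext <;> simp only [Quaternion.re_mul, Quaternion.imI_mul, Quaternion.imJ_mul, Quaternion.imK_mul, Quaternion.re_neg, Quaternion.imI_neg, Quaternion.imJ_neg, Quaternion.imK_neg, Quaternion.re_one, Quaternion.imI_one, Quaternion.imJ_one, Quaternion.imK_one, Quaternion.re_coe, Quaternion.imI_coe, Quaternion.imJ_coe, Quaternion.imK_coe, Quaternion.re_add, Quaternion.imI_add, Quaternion.imJ_add, Quaternion.imK_add] <;> simp [hi, hj]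
  have hn : q.re * q.re + q.imI * q.imI + q.imJ * q.imJ + q.imK * q.imK = 1 := by
    have h1 : Quaternion.normSq q = 1 := by
      rw [Quaternion.normSq_eq_norm_mul_self, hq]; norm_num
    rw [Quaternion.normSq_def'] at h1
    nlinarith [h1]
  rw [hqd]
  simp only [add_smul, mul_smul, hadd1, hadd2, hsmul1, hsmul2, sI, sJ, sK,
    sii, sjj, skk, sji, sij, ski, sik, sjk, skj, hneg1, hneg2, neg_neg,
    mul_neg, neg_mul]
  linear_combination α x y * hn
end
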